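/- arXiv:1702.03606 — 4 statements merged into one kernel-verified Lean document; each statement's English description precedes it below -/
import Mathlib

section
/- For two finite simple graphs G and H, the Euler characteristic of the Zykov join satisfies χ(G+H) = χ(G) + χ(H) − χ(G)·χ(H). -/
/-- The Zykov join of two finite simple graphs: take the disjoint union of the
vertex sets, keep all edges of both graphs, and connect every vertex of the
first graph with every vertex of the second graph. -/
def zykovJoin {V W : Type} (G : SimpleGraph V) (H : SimpleGraph W) :
    SimpleGraph (V ⊕ W) where
  Adj x y :=
    match x, y with
    | Sum.inl a, Sum.inl b => G.Adj a b
    | Sum.inr a, Sum.inr b => H.Adj a b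
    | _, _ => True
  symm := by
    constructor
    intro x y h
    cases x <;> cases y
    · exact G.adj_symm h
    · trivial
    · trivial
    · exact H.adj_symm h
  loopless := by
    constructor
    intro x
    cases x
    · exact G.irrefl
    · exact H.irrefl

open scoped Classical in
/-- The Euler characteristic of a finite simple graph:
`χ(G) = Σ_k (-1)^k v_k`, where `v_k` is the number of `(k+1)`-cliques
(`k`-dimensional simplices) of `G`. -/
noncomputable def eulerChar {V : Type} [Fintype V] (G : SimpleGraph V) : ℤ :=
  ∑ k ∈ Finset.range (Fintype.card V),
    (-1 : ℤ) ^ k * ((G.cliqueFinset (k + 1)).card : ℤ)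

open Finset in
open scoped Classical in
/-- The signed sum `Σ (-1)^|s|` over all cliques `s` of `G`, including the
empty clique. -/
noncomputable def phiChar {V : Type} [Fintype V] (G : SimpleGraph V) : ℤ :=
  ∑ s ∈ Finset.univ.filter (fun s : Finset V => G.IsClique (s : Set V)),
    (-1 : ℤ) ^ s.card

open Finset in
open scoped Classical in
lemma phiChar_eq {V : Type} [Fintype V] (G : SimpleGraph V) :
    phiChar G = 1 - eulerChar G := by
  classical
  have hmaps : ∀ s ∈ Finset.univ.filter (fun s : Finset V => G.IsClique (s : Set V)),
      s.card ∈ Finset.range (Fintype.card V + 1) := by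
    intro s _
    simpa using Nat.lt_succ_of_le (Finset.card_le_univ s)
  have h1 : phiChar G = ∑ k ∈ Finset.range (Fintype.card V + 1),
      ∑ s ∈ (Finset.univ.filter (fun s : Finset V => G.IsClique (s : Set V))).filter
        (fun s => s.card = k), (-1 : ℤ) ^ s.card := by
    rw [phiChar, Finset.sum_fiberwise_of_maps_to hmaps]
  have h2 : ∀ k, (Finset.univ.filter (fun s : Finset V => G.IsClique (s : Set V))).filter
      (fun s => s.card = k) = G.cliqueFinset k := by
    intro k
    ext s
    simp [SimpleGraph.mem_cliqueFinset_iff, SimpleGraph.isNClique_iff, and_assoc]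
  have h3 : phiChar G = ∑ k ∈ Finset.range (Fintype.card V + 1),
      (-1 : ℤ) ^ k * ((G.cliqueFinset k).card : ℤ) := by
    rw [h1]
    refine Finset.sum_congr rfl fun k _ => ?_
    rw [h2]
    rw [Finset.sum_congr rfl (fun s hs => by
      rw [(SimpleGraph.mem_cliqueFinset_iff.mp hs).card_eq])]
    simp [mul_comm]
  have h0 : G.cliqueFinset 0 = {∅} := by
    ext s
    simp [SimpleGraph.mem_cliqueFinset_iff, SimpleGraph.isNClique_iff,
      Finset.card_eq_zero]
    intro h; subst h; simp [SimpleGraph.IsClique]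
  rw [h3, Finset.sum_range_succ', h0, eulerChar]
  have h4 : ∀ k ∈ Finset.range (Fintype.card V),
      (-1:ℤ)^(k+1) * ((G.cliqueFinset (k+1)).card : ℤ)
        = -((-1:ℤ)^k * ((G.cliqueFinset (k+1)).card : ℤ)) := fun k _ => by ring
  rw [Finset.sum_congr rfl h4, Finset.sum_neg_distrib]
  simp
  ring

open Finset in
lemma isClique_zykovJoin_iff {V W : Type} (G : SimpleGraph V) (H : SimpleGraph W)
    (s : Finset (V ⊕ W)) :
    (zykovJoin G H).IsClique (s : Set (V ⊕ W)) ↔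
      G.IsClique (s.toLeft : Set V) ∧ H.IsClique (s.toRight : Set W) := by
  constructor
  · intro h
    constructor
    · intro a ha b hb hab
      have := h (Finset.mem_coe.mp (by simpa using ha) : (Sum.inl a : V ⊕ W) ∈ (s : Set (V ⊕ W)))
        (by simpa using (Finset.mem_toLeft.mp hb)) (by simpa using hab)
      exact this
    · intro a ha b hb hab
      have := h (show (Sum.inr a : V ⊕ W) ∈ (s : Set (V ⊕ W)) by
          simpa using (Finset.mem_toRight.mp ha))
        (by simpa using (Finset.mem_toRight.mp hb)) (by simpa using hab)
      exact this
  · rintro ⟨hG, hH⟩ x hx y hy hxy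
    cases x with
    | inl a =>
      cases y with
      | inl b =>
        exact hG (Finset.mem_coe.mpr (Finset.mem_toLeft.mpr (by exact_mod_cast hx)))
          (Finset.mem_coe.mpr (Finset.mem_toLeft.mpr (by exact_mod_cast hy)))
          (fun h => hxy (by rw [h]))
      | inr b => trivial
    | inr a =>
      cases y with
      | inl b => trivial
      | inr b =>
        exact hH (Finset.mem_coe.mpr (Finset.mem_toRight.mpr (by exact_mod_cast hx)))
          (Finset.mem_coe.mpr (Finset.mem_toRight.mpr (by exact_mod_cast hy)))
          (fun h => hxy (by rw [h]))

open Finset in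
open scoped Classical in
lemma phiChar_zykovJoin {V W : Type} [Fintype V] [Fintype W]
    (G : SimpleGraph V) (H : SimpleGraph W) :
    phiChar (zykovJoin G H) = phiChar G * phiChar H := by
  classical
  rw [phiChar, phiChar, phiChar, Finset.sum_mul_sum, ← Finset.sum_product']
  refine Finset.sum_nbij' (fun s => (s.toLeft, s.toRight))
    (fun p => p.1.disjSum p.2) ?_ ?_ ?_ ?_ ?_
  · intro s hs
    simp only [Finset.mem_filter, Finset.mem_univ, true_and] at hs ⊢
    rw [isClique_zykovJoin_iff] at hs
    simp [Finset.mem_product, hs.1, hs.2]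
  · intro p hp
    simp only [Finset.mem_product, Finset.mem_filter, Finset.mem_univ, true_and] at hp
    simp only [Finset.mem_filter, Finset.mem_univ, true_and]
    rw [isClique_zykovJoin_iff]
    simpa using hp
  · intro s _
    exact Finset.toLeft_disjSum_toRight
  · intro p _
    simp [Prod.ext_iff]
  · intro s _
    rw [← Finset.card_toLeft_add_card_toRight, pow_add]

/-- Euler characteristic of the Zykov join:
`χ(G+H) = χ(G) + χ(H) - χ(G)·χ(H)`. -/
theorem eulerChar_zykovJoin {V W : Type} [Fintype V] [Fintype W]
    (G : SimpleGraph V) (H : SimpleGraph W) :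
    eulerChar (zykovJoin G H) =
      eulerChar G + eulerChar H - eulerChar G * eulerChar H := by
  have h := phiChar_zykovJoin G H
  rw [phiChar_eq, phiChar_eq, phiChar_eq] at h
  linarith [h, sq_nonneg (eulerChar G)]
end

section
/- The extended Euler polynomial is multiplicative over the Zykov join: f_{G+H}(x) = f_G(x) · f_H(x). -/
open scoped Classical in
/-- The extended Euler polynomial (f-vector generating function) of a finite
simple graph: `f_G(x) = 1 + Σ_{k ≥ 0} v_k x^{k+1}`, where `v_k` is the number
of `(k+1)`-cliques of `G`. -/
noncomputable def eulerPoly {V : Type} [Fintype V] (G : SimpleGraph V) :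
    Polynomial ℤ :=
  1 + ∑ k ∈ Finset.range (Fintype.card V),
    Polynomial.C ((G.cliqueFinset (k + 1)).card : ℤ) * Polynomial.X ^ (k + 1)

open scoped Classical in
/-- Sum of `X^|s|` over all cliques `s` (including the empty clique). -/
noncomputable def cliqueSum {V : Type} [Fintype V] (G : SimpleGraph V) :
    Polynomial ℤ :=
  ∑ s ∈ Finset.univ.filter (fun s : Finset V => G.IsClique ↑s),
    (Polynomial.X : Polynomial ℤ) ^ s.card

open scoped Classical in
lemma cliqueSum_eq_eulerPoly {V : Type} [Fintype V] (G : SimpleGraph V) :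
    cliqueSum G = eulerPoly G := by
  classical
  have hmaps : ∀ s ∈ Finset.univ.filter (fun s : Finset V => G.IsClique ↑s),
      s.card ∈ Finset.range (Fintype.card V + 1) := by
    intro s _
    simpa [Finset.mem_range, Nat.lt_succ_iff] using Finset.card_le_univ s
  rw [cliqueSum, ← Finset.sum_fiberwise_of_maps_to hmaps]
  have hterm : ∀ k, (∑ s ∈ (Finset.univ.filter
      (fun s : Finset V => G.IsClique ↑s)).filter (fun s => s.card = k),
        (Polynomial.X : Polynomial ℤ) ^ s.card)
      = ((Finset.univ.filter (fun s : Finset V => G.IsClique ↑s)).filter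
          (fun s => s.card = k)).card • (Polynomial.X : Polynomial ℤ) ^ k := by
    intro k
    rw [Finset.sum_congr rfl (fun s hs => by
      rw [(Finset.mem_filter.mp hs).2]), Finset.sum_const]
  simp only [hterm]
  rw [Finset.sum_range_succ']
  have h0 : ((Finset.univ.filter (fun s : Finset V => G.IsClique ↑s)).filter
      (fun s => s.card = 0)) = {∅} := by
    ext s
    simp [Finset.card_eq_zero]
    rintro rfl
    simp [SimpleGraph.IsClique]
  have hk : ∀ k, ((Finset.univ.filter (fun s : Finset V => G.IsClique ↑s)).filter
      (fun s => s.card = k + 1)) = G.cliqueFinset (k + 1) := by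
    intro k
    ext s
    simp [SimpleGraph.mem_cliqueFinset_iff, SimpleGraph.isNClique_iff, and_comm]
  simp only [hk, h0, Finset.card_singleton, one_smul, pow_zero, eulerPoly]
  rw [add_comm]
  congr 1
  refine Finset.sum_congr rfl fun k _ => ?_
  rw [nsmul_eq_mul]
  rw [Polynomial.C_eq_natCast]

lemma isClique_disjSum {V W : Type} (G : SimpleGraph V) (H : SimpleGraph W)
    (s : Finset V) (t : Finset W) :
    (zykovJoin G H).IsClique ↑(s.disjSum t) ↔ G.IsClique ↑s ∧ H.IsClique ↑t := by
  constructor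
  · intro h
    constructor
    · intro a ha b hb hab
      have := h (x := Sum.inl a) (by simpa using ha) (y := Sum.inl b)
        (by simpa using hb) (by simpa using hab)
      exact this
    · intro a ha b hb hab
      have := h (x := Sum.inr a) (by simpa using ha) (y := Sum.inr b)
        (by simpa using hb) (by simpa using hab)
      exact this
  · rintro ⟨hG, hH⟩ x hx y hy hxy
    rcases x with a | a <;> rcases y with b | b <;>
      simp only [Finset.mem_coe, Finset.inl_mem_disjSum, Finset.inr_mem_disjSum] at hx hy
    · exact hG (by simpa using hx) (by simpa using hy)
        (fun h => hxy (by rw [h]))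
    · trivial
    · trivial
    · exact hH (by simpa using hx) (by simpa using hy)
        (fun h => hxy (by rw [h]))

open scoped Classical in
lemma cliqueSum_zykovJoin {V W : Type} [Fintype V] [Fintype W]
    (G : SimpleGraph V) (H : SimpleGraph W) :
    cliqueSum (zykovJoin G H) = cliqueSum G * cliqueSum H := by
  classical
  rw [cliqueSum, cliqueSum, cliqueSum, Finset.sum_mul_sum]
  rw [← Finset.sum_product']
  refine Finset.sum_bij' (fun u _ => (u.toLeft, u.toRight))
    (fun p _ => p.1.disjSum p.2) ?_ ?_ ?_ ?_ ?_
  · intro u hu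
    simp only [Finset.mem_filter, Finset.mem_univ, true_and] at hu ⊢
    rw [Finset.mem_product]
    have := (isClique_disjSum G H u.toLeft u.toRight).mp
      (by rwa [Finset.toLeft_disjSum_toRight])
    simpa [Finset.mem_filter] using this
  · intro p hp
    simp only [Finset.mem_product, Finset.mem_filter, Finset.mem_univ,
      true_and] at hp ⊢
    exact (isClique_disjSum G H p.1 p.2).mpr hp
  · intro u _
    exact Finset.toLeft_disjSum_toRight
  · intro p _
    simp
  · intro u hu
    rw [← Finset.card_toLeft_add_card_toRight, pow_add]

/-- The extended Euler polynomial is multiplicative over the Zykov join: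
`f_{G+H}(x) = f_G(x) · f_H(x)`. -/
theorem eulerPoly_zykovJoin {V W : Type} [Fintype V] [Fintype W]
    (G : SimpleGraph V) (H : SimpleGraph W) :
    eulerPoly (zykovJoin G H) = eulerPoly G * eulerPoly H := by
  rw [← cliqueSum_eq_eulerPoly, ← cliqueSum_eq_eulerPoly, ← cliqueSum_eq_eulerPoly,
    cliqueSum_zykovJoin]
end

section
/- In the Barycentric refinement G_1 of a finite abstract simplicial complex G, the unit sphere S(x) of any vertex x is the Zykov join of the stable sphere S^-(x) and the unstable sphere S^+(x): S(x) = S^-(x) + S^+(x). -/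
/-- A finite abstract simplicial complex on a vertex type `α`: a finite set of
nonempty finite sets (simplices) closed under taking nonempty subsets. -/
def IsSimplicialComplex {α : Type} [DecidableEq α] (K : Finset (Finset α)) : Prop :=
  (∀ s ∈ K, s.Nonempty) ∧ ∀ s ∈ K, ∀ t ⊆ s, t.Nonempty → t ∈ K

/-- The Barycentric refinement of a finite abstract simplicial complex `K`:
the graph whose vertices are the simplices of `K`, two simplices being
adjacent iff one is a proper subset of the other. -/
def barycentric {α : Type} [DecidableEq α] (K : Finset (Finset α)) :
    SimpleGraph {s : Finset α // s ∈ K} where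
  Adj x y := x.1 ⊂ y.1 ∨ y.1 ⊂ x.1
  symm := by constructor; intro x y h; tauto
  loopless := by constructor; intro x h; rcases h with h | h <;> exact (lt_irrefl _ h)

/-- In the Barycentric refinement `G₁` of a finite abstract simplicial complex,
the unit sphere `S(x)` of any vertex `x` is the Zykov join of the stable sphere
`S⁻(x)` (neighbors that are proper subsets of `x`) and the unstable sphere
`S⁺(x)` (neighbors that properly contain `x`): `S(x) = S⁻(x) + S⁺(x)`. -/
theorem sphere_eq_join_stable_unstable {α : Type} [DecidableEq α]
    (K : Finset (Finset α)) (hK : IsSimplicialComplex K)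
    (x : {s : Finset α // s ∈ K}) :
    Nonempty
      ((barycentric K).induce ((barycentric K).neighborSet x) ≃g
        zykovJoin
          ((barycentric K).induce {y : {s : Finset α // s ∈ K} | y.1 ⊂ x.1})
          ((barycentric K).induce {y : {s : Finset α // s ∈ K} | x.1 ⊂ y.1})) := by
  classical
  refine ⟨⟨?_, ?_⟩⟩
  · exact {
      toFun := fun y =>
        if h : y.1.1 ⊂ x.1 then Sum.inl ⟨y.1, h⟩
        else Sum.inr ⟨y.1, (y.2.resolve_right h : x.1 ⊂ y.1.1)⟩
      invFun := fun z =>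
        match z with
        | Sum.inl a => ⟨a.1, Or.inr a.2⟩
        | Sum.inr b => ⟨b.1, Or.inl b.2⟩
      left_inv := by
        intro y
        by_cases h : y.1.1 ⊂ x.1 <;> simp [h]
      right_inv := by
        rintro (a | b)
        · have h : a.1.1 ⊂ x.1 := a.2
          simp [h]
        · have h : ¬ b.1.1 ⊂ x.1 := fun h => (lt_irrefl _ (h.trans b.2)).elim
          simp [h] }
  · intro y z
    have key : ∀ a b : {s : Finset α // s ∈ K}, a.1 ⊂ x.1 → x.1 ⊂ b.1 →
        (a.1 ⊂ b.1 ∨ b.1 ⊂ a.1) := fun a b ha hb => Or.inl (ha.trans hb)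
    by_cases hy : y.1.1 ⊂ x.1 <;> by_cases hz : z.1.1 ⊂ x.1 <;>
      simp only [Equiv.coe_fn_mk, hy, hz, dif_pos, dif_neg, not_false_iff,
        zykovJoin, SimpleGraph.comap_adj, Function.Embedding.coe_subtype,
        barycentric, SimpleGraph.induce]
    all_goals simp only [Equiv.coe_fn_mk, hy, hz, dif_pos, dif_neg, not_false_iff, SimpleGraph.comap_adj, Function.Embedding.coe_subtype, EquivLike.coe, DFunLike.coe]
    · exact Iff.rfl
    · exact iff_of_true trivial (key y z hy (z.2.resolve_right hz))
    · exact iff_of_true trivial ((key z y hz (y.2.resolve_right hy)).symm)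
    · exact Iff.rfl
end

section
/- The Zykov join of an Evako n-sphere and an Evako m-sphere is an Evako (n+m+1)-sphere. -/
/-- A finite simple graph is contractible (in the inductive sense of Ivashchenko)
if it is the one-point graph, or if it has a vertex `v` whose unit sphere
(induced subgraph on the neighbors of `v`) and whose removal are both
contractible. -/
inductive GraphContractible : ∀ {V : Type}, SimpleGraph V → Prop
  | point {V : Type} (G : SimpleGraph V) (h : ∃ v : V, ∀ w : V, w = v) :
      GraphContractible G
  | step {V : Type} (G : SimpleGraph V) (v : V)
      (h1 : GraphContractible (G.induce (G.neighborSet v)))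
      (h2 : GraphContractible (G.induce {w : V | w ≠ v})) :
      GraphContractible G

/-- Evako `d`-spheres, defined inductively: the empty graph is the unique
`(-1)`-sphere; a graph is a `d`-sphere if every unit sphere in it is a
`(d-1)`-sphere and removing some vertex leaves a contractible graph. -/
inductive EvakoSphere : ∀ {V : Type}, SimpleGraph V → ℤ → Prop
  | empty {V : Type} (G : SimpleGraph V) (h : IsEmpty V) : EvakoSphere G (-1)
  | step {V : Type} (G : SimpleGraph V) (d : ℤ)
      (hS : ∀ v : V, EvakoSphere (G.induce (G.neighborSet v)) (d - 1))
      (hv : ∃ v : V, GraphContractible (G.induce {w : V | w ≠ v})) :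
      EvakoSphere G d

namespace EvakoAux

open SimpleGraph

variable {V W V' W' : Type}

/-- Restrict an isomorphism to induced subgraphs. -/
def induceSetIso {G : SimpleGraph V} {G' : SimpleGraph V'} (e : G ≃g G')
    (s : Set V) (t : Set V') (h : ∀ a, a ∈ s ↔ e a ∈ t) :
    G.induce s ≃g G'.induce t where
  toEquiv := e.toEquiv.subtypeEquiv h
  map_rel_iff' := by
    rintro ⟨a, ha⟩ ⟨b, hb⟩
    simp [comap_adj, e.map_adj_iff]

lemma contr_of_iso {G : SimpleGraph V} (h : GraphContractible G) :
    ∀ {V'} (G' : SimpleGraph V') (_ : G ≃g G'), GraphContractible G' := by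
  induction h with
  | point G hp =>
    intro V' G' e
    obtain ⟨v, hv⟩ := hp
    refine .point G' ⟨e v, fun w => ?_⟩
    rw [← e.apply_symm_apply w, hv (e.symm w)]
  | step G v h1 h2 ih1 ih2 =>
    intro V' G' e
    refine .step G' (e v) (ih1 _ (induceSetIso e _ _ ?_)) (ih2 _ (induceSetIso e _ _ ?_))
    · intro a
      simp [mem_neighborSet, e.map_adj_iff]
    · intro a
      simp [e.toEquiv.injective.ne_iff]

lemma sphere_of_iso {G : SimpleGraph V} {d : ℤ} (h : EvakoSphere G d) :
    ∀ {V'} (G' : SimpleGraph V') (_ : G ≃g G'), EvakoSphere G' d := by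
  induction h with
  | empty G hV =>
    intro V' G' e
    haveI := hV
    exact .empty G' e.toEquiv.symm.isEmpty
  | step G d hS hv ih =>
    intro V' G' e
    refine .step G' d (fun v' => ih (e.symm v') _ (induceSetIso e _ _ ?_)) ?_
    · intro a
      simp only [mem_neighborSet]
      conv_rhs => rw [← e.apply_symm_apply v']
      exact e.map_adj_iff.symm
    · obtain ⟨v, hc⟩ := hv
      exact ⟨e v, contr_of_iso hc _
        (induceSetIso e _ _ (fun a => by simp [e.toEquiv.injective.ne_iff]))⟩

lemma finite_of_finite_ne {α : Type} (a : α) (h : Finite {x : α // x ≠ a}) : Finite α := by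
  haveI := h
  refine Finite.of_surjective
    (fun o : {x : α // x ≠ a} ⊕ Unit => o.elim Subtype.val (fun _ => a)) ?_
  intro x
  by_cases hx : x = a
  · exact ⟨Sum.inr (), hx.symm⟩
  · exact ⟨Sum.inl ⟨x, hx⟩, rfl⟩

lemma contr_finite {G : SimpleGraph V} (h : GraphContractible G) : Finite V := by
  induction h with
  | point G hp =>
    obtain ⟨v, hv⟩ := hp
    exact Finite.of_surjective (fun _ : Unit => v) (fun x => ⟨(), (hv x).symm⟩)
  | step G v h1 h2 ih1 ih2 =>
    exact finite_of_finite_ne v ih2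

/-- Decompose an induced subgraph of a join as a join of induced subgraphs. -/
def splitIso (G : SimpleGraph V) (H : SimpleGraph W) (u : Set (V ⊕ W)) :
    (zykovJoin G H).induce u ≃g
      zykovJoin (G.induce {a : V | Sum.inl a ∈ u}) (H.induce {b : W | Sum.inr b ∈ u}) where
  toEquiv :=
    { toFun := fun x => match x with
        | ⟨Sum.inl a, h⟩ => Sum.inl ⟨a, h⟩
        | ⟨Sum.inr b, h⟩ => Sum.inr ⟨b, h⟩
      invFun := fun y => match y with
        | Sum.inl ⟨a, h⟩ => ⟨Sum.inl a, h⟩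
        | Sum.inr ⟨b, h⟩ => ⟨Sum.inr b, h⟩
      left_inv := fun x => by rcases x with ⟨a | b, h⟩ <;> rfl
      right_inv := fun y => by rcases y with ⟨a, h⟩ | ⟨b, h⟩ <;> rfl }
  map_rel_iff' := by
    rintro ⟨a | a, ha⟩ ⟨b | b, hb⟩ <;> simp [zykovJoin, comap_adj]

/-- Join of two isomorphisms. -/
def joinCongr {G : SimpleGraph V} {G' : SimpleGraph V'} {H : SimpleGraph W}
    {H' : SimpleGraph W'} (e1 : G ≃g G') (e2 : H ≃g H') :
    zykovJoin G H ≃g zykovJoin G' H' where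
  toEquiv := Equiv.sumCongr e1.toEquiv e2.toEquiv
  map_rel_iff' := by
    rintro (a | a) (b | b) <;> simp [zykovJoin, e1.map_adj_iff, e2.map_adj_iff]

def induceCongr {G : SimpleGraph V} {s t : Set V} (h : s = t) :
    G.induce s ≃g G.induce t := by subst h; exact RelIso.refl _

def joinEmptyLeft {G : SimpleGraph V} {H : SimpleGraph W} [IsEmpty V] :
    zykovJoin G H ≃g H where
  toEquiv := Equiv.emptySum V W
  map_rel_iff' := by
    rintro (a | a) (b | b)
    · exact isEmptyElim a
    · exact isEmptyElim a
    · exact isEmptyElim b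
    · simp [zykovJoin, Equiv.emptySum]

def joinEmptyRight {G : SimpleGraph V} {H : SimpleGraph W} [IsEmpty W] :
    zykovJoin G H ≃g G where
  toEquiv := Equiv.sumEmpty V W
  map_rel_iff' := by
    rintro (a | a) (b | b)
    · simp [zykovJoin, Equiv.sumEmpty]
    · exact isEmptyElim b
    · exact isEmptyElim a
    · exact isEmptyElim a

section SpecificIsos

variable (G : SimpleGraph V) (H : SimpleGraph W)

def isoSphereInl (v : V) :
    zykovJoin (G.induce (G.neighborSet v)) H ≃g
      (zykovJoin G H).induce ((zykovJoin G H).neighborSet (Sum.inl v)) :=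
  (joinCongr
      (induceCongr (show G.neighborSet v =
        {a : V | Sum.inl a ∈ (zykovJoin G H).neighborSet (Sum.inl v)} from
          Set.ext fun a => Iff.rfl))
      ((induceUnivIso H).symm.trans
        (induceCongr (show (Set.univ : Set W) =
          {b : W | Sum.inr b ∈ (zykovJoin G H).neighborSet (Sum.inl v)} from
            (Set.eq_univ_of_forall fun b =>
              (by trivial : Sum.inr b ∈ (zykovJoin G H).neighborSet (Sum.inl v))).symm)))).trans
    (splitIso G H _).symm

def isoSphereInr (w : W) :
    zykovJoin G (H.induce (H.neighborSet w)) ≃g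
      (zykovJoin G H).induce ((zykovJoin G H).neighborSet (Sum.inr w)) :=
  (joinCongr
      ((induceUnivIso G).symm.trans
        (induceCongr (show (Set.univ : Set V) =
          {a : V | Sum.inl a ∈ (zykovJoin G H).neighborSet (Sum.inr w)} from
            (Set.eq_univ_of_forall fun a =>
              (by trivial : Sum.inl a ∈ (zykovJoin G H).neighborSet (Sum.inr w))).symm)))
      (induceCongr (show H.neighborSet w =
        {b : W | Sum.inr b ∈ (zykovJoin G H).neighborSet (Sum.inr w)} from
          Set.ext fun b => Iff.rfl))).trans
    (splitIso G H _).symm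

def isoDelInl (v : V) :
    zykovJoin (G.induce {a : V | a ≠ v}) H ≃g
      (zykovJoin G H).induce {x : V ⊕ W | x ≠ Sum.inl v} :=
  (joinCongr
      (induceCongr (show {a : V | a ≠ v} =
        {a : V | Sum.inl a ∈ {x : V ⊕ W | x ≠ Sum.inl v}} from by ext a; simp))
      ((induceUnivIso H).symm.trans
        (induceCongr (show (Set.univ : Set W) =
          {b : W | Sum.inr b ∈ {x : V ⊕ W | x ≠ Sum.inl v}} from
            (Set.eq_univ_of_forall fun b => by simp).symm)))).trans
    (splitIso G H _).symm

def isoDelInr (w : W) :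
    zykovJoin G (H.induce {b : W | b ≠ w}) ≃g
      (zykovJoin G H).induce {x : V ⊕ W | x ≠ Sum.inr w} :=
  (joinCongr
      ((induceUnivIso G).symm.trans
        (induceCongr (show (Set.univ : Set V) =
          {a : V | Sum.inl a ∈ {x : V ⊕ W | x ≠ Sum.inr w}} from
            (Set.eq_univ_of_forall fun a => by simp).symm)))
      (induceCongr (show {b : W | b ≠ w} =
        {b : W | Sum.inr b ∈ {x : V ⊕ W | x ≠ Sum.inr w}} from by ext b; simp))).trans
    (splitIso G H _).symm

end SpecificIsos

lemma card_lt {W : Type} [Finite W] (w : W) (s : Set W) (hs : ∀ x ∈ s, x ≠ w) :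
    Nat.card s < Nat.card W := by
  rw [Nat.card_coe_set_eq, ← Set.ncard_univ W]
  refine Set.ncard_lt_ncard ⟨Set.subset_univ s, fun h => ?_⟩ (Set.finite_univ)
  exact hs w (h trivial) rfl

/-- The join of a contractible graph with any finite graph is contractible. -/
lemma cone_contr {G : SimpleGraph V} (hG : GraphContractible G) :
    ∀ (k : ℕ) {W : Type} (H : SimpleGraph W), Finite W → Nat.card W ≤ k →
      GraphContractible (zykovJoin G H) := by
  intro k
  induction k with
  | zero =>
    intro W H hF hc
    haveI := hF
    haveI : IsEmpty W := by
      rcases Nat.card_eq_zero.mp (Nat.le_zero.mp hc) with h | h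
      · exact h
      · haveI := h; exact (not_finite W).elim
    exact contr_of_iso hG _ joinEmptyRight.symm
  | succ k ih =>
    intro W H hF hc
    haveI := hF
    rcases isEmpty_or_nonempty W with hW | ⟨⟨w⟩⟩
    · exact contr_of_iso hG _ joinEmptyRight.symm
    · refine .step (zykovJoin G H) (Sum.inr w) ?_ ?_
      · refine contr_of_iso (ih (H.induce (H.neighborSet w)) inferInstance ?_) _
          (isoSphereInr G H w)
        have := card_lt w (H.neighborSet w) (fun x hx => (H.ne_of_adj hx).symm)
        omega
      · refine contr_of_iso (ih (H.induce {b : W | b ≠ w}) inferInstance ?_) _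
          (isoDelInr G H w)
        have := card_lt w {b : W | b ≠ w} (fun x hx => hx)
        omega

end EvakoAux


namespace EvakoAux

lemma main_aux {V : Type} {G : SimpleGraph V} {n : ℤ} (hG : EvakoSphere G n) :
    ∀ {W : Type} (H : SimpleGraph W) (m : ℤ), EvakoSphere H m →
      EvakoSphere (zykovJoin G H) (n + m + 1) := by
  induction hG with
  | empty G hV =>
    intro W H m hH
    haveI := hV
    have e : (-1 : ℤ) + m + 1 = m := by ring
    rw [e]
    exact sphere_of_iso hH _ joinEmptyLeft.symm
  | step G n hS hv ih =>
    intro W H m hH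
    induction hH with
    | empty H hW =>
      haveI := hW
      have e : n + (-1 : ℤ) + 1 = n := by ring
      rw [e]
      exact sphere_of_iso (EvakoSphere.step G n hS hv) _ joinEmptyRight.symm
    | step H m hS' hv' ih' =>
      refine .step _ (n + m + 1) ?_ ?_
      · rintro (v | w)
        · have h1 := ih v H m (.step H m hS' hv')
          have e : n + m + 1 - 1 = n - 1 + m + 1 := by ring
          rw [e]
          exact sphere_of_iso h1 _ (isoSphereInl G H v)
        · have h1 := ih' w
          have e : n + m + 1 - 1 = n + (m - 1) + 1 := by ring
          rw [e]
          exact sphere_of_iso h1 _ (isoSphereInr G H w)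
      · obtain ⟨v, hcv⟩ := hv
        obtain ⟨w, hcw⟩ := hv'
        haveI := finite_of_finite_ne w (contr_finite hcw)
        exact ⟨Sum.inl v,
          contr_of_iso (cone_contr hcv (Nat.card _) H inferInstance le_rfl) _
            (isoDelInl G H v)⟩

end EvakoAux

/-- The Zykov join of an Evako `n`-sphere and an Evako `m`-sphere is an Evako
`(n+m+1)`-sphere. -/
theorem evakoSphere_zykovJoin {V W : Type} (G : SimpleGraph V) (H : SimpleGraph W)
    (n m : ℤ) (hG : EvakoSphere G n) (hH : EvakoSphere H m) :
    EvakoSphere (zykovJoin G H) (n + m + 1) := by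
  exact EvakoAux.main_aux hG H m hH
end
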